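/- Let Q̃ be a symmetric (n−1)×(n−1) matrix with λ := λ_min(Q̃) < 0, g̃ ∈ ℝ^{n−1}. Define the n×n matrix Q := Diag(Q̃, λ) (block diagonal with Q̃ and the scalar λ) and g := (g̃; 0) ∈ ℝⁿ. Then the minimum of yᵀQy + 2gᵀy over the unit ball {y ∈ ℝⁿ : yᵀy ≤ 1} is attained at some point with yₙ = 0, and this minimum equals the minimum of ỹᵀQ̃ỹ + 2g̃ᵀỹ over {ỹ ∈ ℝ^{n−1} : ỹᵀỹ ≤ 1}. -/

import Mathlib

open Matrix

open Matrix

lemma bigF {n : ℕ} (Qt : Matrix (Fin n) (Fin n) ℝ) (gt : Fin n → ℝ) (lam : ℝ)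
    (w : (Fin n ⊕ Unit) → ℝ) :
    w ⬝ᵥ (Matrix.fromBlocks Qt 0 0 (Matrix.of fun _ _ => lam)).mulVec w
      + 2 * (Sum.elim gt 0 ⬝ᵥ w)
    = (w ∘ Sum.inl) ⬝ᵥ Qt.mulVec (w ∘ Sum.inl) + lam * (w (Sum.inr ()))^2
      + 2 * (gt ⬝ᵥ (w ∘ Sum.inl)) := by
  simp [dotProduct, Matrix.mulVec, Matrix.fromBlocks, Fintype.sum_sum_type,
    Function.comp, Finset.mul_sum, Finset.sum_mul]
  ring

lemma normSum {n : ℕ} (w : (Fin n ⊕ Unit) → ℝ) :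
    w ⬝ᵥ w = (w ∘ Sum.inl) ⬝ᵥ (w ∘ Sum.inl) + (w (Sum.inr ()))^2 := by
  simp [dotProduct, Fintype.sum_sum_type, Function.comp, sq]

lemma exists_min {n : ℕ} (Qt : Matrix (Fin n) (Fin n) ℝ) (gt : Fin n → ℝ) :
    ∃ y : Fin n → ℝ, y ⬝ᵥ y ≤ 1 ∧ ∀ w : Fin n → ℝ, w ⬝ᵥ w ≤ 1 →
      y ⬝ᵥ Qt.mulVec y + 2 * (gt ⬝ᵥ y) ≤ w ⬝ᵥ Qt.mulVec w + 2 * (gt ⬝ᵥ w) := by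
  have hcontdot : Continuous fun w : Fin n → ℝ => w ⬝ᵥ w := by
    simp only [dotProduct]
    exact continuous_finset_sum _ fun i _ => (continuous_apply i).mul (continuous_apply i)
  have hcontf : Continuous fun w : Fin n → ℝ => w ⬝ᵥ Qt.mulVec w + 2 * (gt ⬝ᵥ w) := by
    simp only [dotProduct, Matrix.mulVec]
    apply Continuous.add
    · exact continuous_finset_sum _ fun i _ => (continuous_apply i).mul
        (continuous_finset_sum _ fun j _ => continuous_const.mul (continuous_apply j))
    · exact continuous_const.mul
        (continuous_finset_sum _ fun i _ => continuous_const.mul (continuous_apply i))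
  have hclosed : IsClosed {w : Fin n → ℝ | w ⬝ᵥ w ≤ 1} :=
    isClosed_le hcontdot continuous_const
  have hbdd : Bornology.IsBounded {w : Fin n → ℝ | w ⬝ᵥ w ≤ 1} := by
    apply Bornology.IsBounded.subset (Metric.isBounded_closedBall (x := (0 : Fin n → ℝ)) (r := 1))
    intro w hw
    simp only [Metric.mem_closedBall, dist_zero_right]
    rw [pi_norm_le_iff_of_nonneg zero_le_one]
    intro i
    have hw' : ∑ j, w j * w j ≤ 1 := by simpa [dotProduct] using hw
    have hle : w i * w i ≤ ∑ j, w j * w j :=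
      Finset.single_le_sum (f := fun j => w j * w j)
        (fun j _ => mul_self_nonneg (w j)) (Finset.mem_univ i)
    rw [Real.norm_eq_abs, abs_le]
    constructor <;> nlinarith
  have hcompact : IsCompact {w : Fin n → ℝ | w ⬝ᵥ w ≤ 1} :=
    Metric.isCompact_of_isClosed_isBounded hclosed hbdd
  have hne : ({w : Fin n → ℝ | w ⬝ᵥ w ≤ 1}).Nonempty := ⟨0, by simp⟩
  obtain ⟨y, hy, hmin⟩ := hcompact.exists_isMinOn hne hcontf.continuousOn
  exact ⟨y, hy, fun w hw => hmin hw⟩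

lemma key_lemma {n : ℕ} (Qt : Matrix (Fin n) (Fin n) ℝ) (hQt : Qt.IsSymm) (gt : Fin n → ℝ)
    (lam : ℝ) (v : Fin n → ℝ) (hv : v ≠ 0) (heig : Qt.mulVec v = lam • v)
    (u : Fin n → ℝ) (t : ℝ) (hu : u ⬝ᵥ u + t ^ 2 ≤ 1) :
    ∃ w : Fin n → ℝ, w ⬝ᵥ w ≤ 1 ∧
      w ⬝ᵥ Qt.mulVec w + 2 * (gt ⬝ᵥ w)
        ≤ u ⬝ᵥ Qt.mulVec u + lam * t ^ 2 + 2 * (gt ⬝ᵥ u) := by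
  set ν := v ⬝ᵥ v with hν_def
  have hν : 0 < ν := by
    rcases Function.ne_iff.mp hv with ⟨i, hi⟩
    have h1 : v i * v i ≤ ν := Finset.single_le_sum (f := fun j => v j * v j)
      (fun j _ => mul_self_nonneg (v j)) (Finset.mem_univ i)
    have h2 : 0 < v i * v i := mul_self_pos.mpr hi
    linarith
  set c := v ⬝ᵥ u with hc_def
  set d := gt ⬝ᵥ v with hd_def
  set r := Real.sqrt (c ^ 2 + ν * t ^ 2) with hr_def
  have harg : (0:ℝ) ≤ c ^ 2 + ν * t ^ 2 := by positivity
  have hr2 : r ^ 2 = c ^ 2 + ν * t ^ 2 := Real.sq_sqrt harg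
  have hrabs : |c| ≤ r := by
    rw [← Real.sqrt_sq_eq_abs]
    exact Real.sqrt_le_sqrt (by nlinarith)
  have hrc1 : -c ≤ r := (neg_le_abs c).trans hrabs
  have hrc2 : c ≤ r := le_trans (le_abs_self c) hrabs
  set s : ℝ := if d ≤ 0 then (-c + r) / ν else (-c - r) / ν with hs_def
  have hνs : ν * s + c = r ∨ ν * s + c = -r := by
    by_cases hd : d ≤ 0
    · left; rw [hs_def, if_pos hd]; field_simp; ring
    · right; rw [hs_def, if_neg hd]; field_simp; ring
  have hs_eq : ν * s ^ 2 + 2 * c * s = t ^ 2 := by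
    have hsq : (ν * s + c) ^ 2 = c ^ 2 + ν * t ^ 2 := by
      rcases hνs with h | h <;> rw [h] <;> [exact hr2; (rw [neg_pow]; simpa using hr2)]
    have : ν * (ν * s ^ 2 + 2 * c * s - t ^ 2) = 0 := by nlinarith
    have := mul_eq_zero.mp this
    rcases this with h | h
    · exact absurd h (ne_of_gt hν)
    · linarith
  have hs_sign : s * d ≤ 0 := by
    by_cases hd : d ≤ 0
    · have hs_nonneg : 0 ≤ s := by
        rw [hs_def, if_pos hd]
        apply div_nonneg _ (le_of_lt hν); linarith
      exact mul_nonpos_of_nonneg_of_nonpos hs_nonneg hd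
    · have hs_nonpos : s ≤ 0 := by
        rw [hs_def, if_neg hd]
        apply div_nonpos_of_nonpos_of_nonneg _ (le_of_lt hν); linarith [abs_le.mp hrabs |>.1]
      exact mul_nonpos_of_nonpos_of_nonneg hs_nonpos (by linarith [not_le.mp hd])
  refine ⟨u + s • v, ?_, ?_⟩
  · have hnorm : (u + s • v) ⬝ᵥ (u + s • v) = u ⬝ᵥ u + 2 * c * s + ν * s ^ 2 := by
      simp [add_dotProduct, dotProduct_add, dotProduct_smul, smul_dotProduct, smul_eq_mul,
        dotProduct_comm u v, ← hc_def, ← hν_def]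
      ring
    rw [hnorm]; linarith
  · have hQv : ∀ x : Fin n → ℝ, x ⬝ᵥ Qt.mulVec v = lam * (v ⬝ᵥ x) := by
      intro x
      rw [heig, dotProduct_smul, smul_eq_mul, dotProduct_comm]
    have hvQu : v ⬝ᵥ Qt.mulVec u = lam * c := by
      rw [dotProduct_mulVec, ← Matrix.mulVec_transpose, hQt.eq, heig, smul_dotProduct,
        smul_eq_mul, hc_def]
    have hquad : (u + s • v) ⬝ᵥ Qt.mulVec (u + s • v)
        = u ⬝ᵥ Qt.mulVec u + lam * (2 * c * s + ν * s ^ 2) := by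
      rw [Matrix.mulVec_add, Matrix.mulVec_smul]
      simp [add_dotProduct, dotProduct_add, dotProduct_smul, smul_dotProduct, smul_eq_mul,
        hQv, hvQu, heig, dotProduct_comm u v, ← hc_def, ← hν_def]
      try ring
    have hlin : gt ⬝ᵥ (u + s • v) = gt ⬝ᵥ u + s * d := by
      simp [dotProduct_add, dotProduct_smul, smul_eq_mul, ← hd_def]; try ring
    rw [hquad, hlin]
    have : lam * (2 * c * s + ν * s ^ 2) = lam * t ^ 2 := by rw [← hs_eq]; ring
    rw [this]; linarith


theorem stmt_15 (n : ℕ) (Qt : Matrix (Fin n) (Fin n) ℝ) (hQt : Qt.IsSymm)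
    (gt : Fin n → ℝ) (lam : ℝ) (hlamneg : lam < 0)
    (hlam_eig : ∃ v : Fin n → ℝ, v ≠ 0 ∧ Qt.mulVec v = lam • v)
    (hlam_min : ∀ v : Fin n → ℝ, lam * (v ⬝ᵥ v) ≤ v ⬝ᵥ Qt.mulVec v) :
    ∃ y : (Fin n ⊕ Unit) → ℝ,
      y ⬝ᵥ y ≤ 1 ∧ y (Sum.inr ()) = 0 ∧
      IsLeast {v : ℝ | ∃ w : (Fin n ⊕ Unit) → ℝ, w ⬝ᵥ w ≤ 1 ∧
          v = w ⬝ᵥ (Matrix.fromBlocks Qt 0 0 (Matrix.of fun _ _ => lam)).mulVec w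
              + 2 * (Sum.elim gt 0 ⬝ᵥ w)}
        (y ⬝ᵥ (Matrix.fromBlocks Qt 0 0 (Matrix.of fun _ _ => lam)).mulVec y
          + 2 * (Sum.elim gt 0 ⬝ᵥ y)) ∧
      IsLeast {v : ℝ | ∃ w : Fin n → ℝ, w ⬝ᵥ w ≤ 1 ∧
          v = w ⬝ᵥ Qt.mulVec w + 2 * (gt ⬝ᵥ w)}
        (y ⬝ᵥ (Matrix.fromBlocks Qt 0 0 (Matrix.of fun _ _ => lam)).mulVec y
          + 2 * (Sum.elim gt 0 ⬝ᵥ y)) := by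
  obtain ⟨v, hv, heig⟩ := hlam_eig
  obtain ⟨yt, hyt, hytmin⟩ := exists_min Qt gt
  set y : (Fin n ⊕ Unit) → ℝ := Sum.elim yt (fun _ => (0:ℝ)) with hy_def
  have hinl : y ∘ Sum.inl = yt := rfl
  have hnorm : y ⬝ᵥ y ≤ 1 := by
    rw [normSum, hinl]; simp only [hy_def, Sum.elim_inr]; simpa using hyt
  have hval : y ⬝ᵥ (Matrix.fromBlocks Qt 0 0 (Matrix.of fun _ _ => lam)).mulVec y
        + 2 * (Sum.elim gt 0 ⬝ᵥ y)
      = yt ⬝ᵥ Qt.mulVec yt + 2 * (gt ⬝ᵥ yt) := by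
    rw [bigF, hinl]; simp [hy_def]
  refine ⟨y, hnorm, rfl, ?_, ?_⟩
  · constructor
    · exact ⟨y, hnorm, rfl⟩
    · rintro x ⟨w, hw, rfl⟩
      have hw' : (w ∘ Sum.inl) ⬝ᵥ (w ∘ Sum.inl) + (w (Sum.inr ())) ^ 2 ≤ 1 := by
        rw [← normSum]; exact hw
      obtain ⟨w', hw'1, hw'2⟩ := key_lemma Qt hQt gt lam v hv heig (w ∘ Sum.inl)
        (w (Sum.inr ())) hw'
      rw [hval, bigF]
      calc yt ⬝ᵥ Qt.mulVec yt + 2 * (gt ⬝ᵥ yt)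
          ≤ w' ⬝ᵥ Qt.mulVec w' + 2 * (gt ⬝ᵥ w') := hytmin w' hw'1
        _ ≤ _ := hw'2
  · constructor
    · exact ⟨yt, hyt, hval⟩
    · rintro x ⟨w, hw, rfl⟩
      rw [hval]
      exact hytmin w hw
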